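/- There exist polynomials p and q such that every minimal derivation of a sequent of size n has depth at most p(n), and every sequent occurring in it has size at most q(n). Concretely, along any branch of a minimal derivation the antecedent sets grow monotonically, sequents on a branch are pairwise distinct and built from the O(n) subformulas of the end-sequent together with ⊥ and K⊥, so the branch length is O(n²) and each sequent has size O(n²). -/

import Mathlib

inductive Fm : Type
  | var : ℕ → Fm
  | bot : Fm
  | and : Fm → Fm → Fm
  | or  : Fm → Fm → Fm
  | imp : Fm → Fm → Fm
  | K   : Fm → Fm
deriving DecidableEq

/-- ¬F abbreviates F → ⊥. -/
def Fm.neg (F : Fm) : Fm := F.imp .bot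

/-- A is a propositional variable or ⊥. -/
def Fm.isAtom (A : Fm) : Prop := A = Fm.bot ∨ ∃ n, A = Fm.var n

/-- K applied to each member of a multiset. -/
def Kset (Γ : Multiset Fm) : Multiset Fm := Γ.map Fm.K
/-- Depth-indexed calculus IELG⁺⁺, parametrized by a constraint `ok` relating the
antecedent of the conclusion to the antecedent of each premise (used to express
monotonicity of rule instances) and a constraint `good` on each sequent of the
derivation (every sequent in a derivation is the conclusion of a rule or an axiom). -/
inductive GPP (ok : Multiset Fm → Multiset Fm → Prop)
    (good : Multiset Fm → Fm → Prop) : ℕ → Multiset Fm → Fm → Prop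
  | ax (n : ℕ) (Γ : Multiset Fm) (A : Fm) :
      A.isAtom → good (A ::ₘ Γ) A → GPP ok good n (A ::ₘ Γ) A
  | con (n : ℕ) (Γ Δ : Multiset Fm) (G : Fm) :
      ok (Γ + Δ) (Γ + Δ + Δ) → good (Γ + Δ) G →
      GPP ok good n (Γ + Δ + Δ) G → GPP ok good (n+1) (Γ + Δ) G
  | andL (n : ℕ) (Γ : Multiset Fm) (F G H : Fm) :
      ok (F.and G ::ₘ Γ) (F ::ₘ G ::ₘ Γ) → good (F.and G ::ₘ Γ) H →
      GPP ok good n (F ::ₘ G ::ₘ Γ) H → GPP ok good (n+1) (F.and G ::ₘ Γ) H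
  | andR (n : ℕ) (Γ : Multiset Fm) (F G : Fm) :
      ok Γ Γ → good Γ (F.and G) →
      GPP ok good n Γ F → GPP ok good n Γ G → GPP ok good (n+1) Γ (F.and G)
  | orL (n : ℕ) (Γ : Multiset Fm) (F G H : Fm) :
      ok (F.or G ::ₘ Γ) (F ::ₘ Γ) → ok (F.or G ::ₘ Γ) (G ::ₘ Γ) →
      good (F.or G ::ₘ Γ) H →
      GPP ok good n (F ::ₘ Γ) H → GPP ok good n (G ::ₘ Γ) H →
      GPP ok good (n+1) (F.or G ::ₘ Γ) H
  | orR1 (n : ℕ) (Γ : Multiset Fm) (F G : Fm) :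
      ok Γ Γ → good Γ (F.or G) → GPP ok good n Γ F → GPP ok good (n+1) Γ (F.or G)
  | orR2 (n : ℕ) (Γ : Multiset Fm) (F G : Fm) :
      ok Γ Γ → good Γ (F.or G) → GPP ok good n Γ G → GPP ok good (n+1) Γ (F.or G)
  | impL (n : ℕ) (Γ : Multiset Fm) (F G H : Fm) :
      ok (F.imp G ::ₘ Γ) (F.imp G ::ₘ Γ) → ok (F.imp G ::ₘ Γ) (G ::ₘ Γ) →
      good (F.imp G ::ₘ Γ) H →
      GPP ok good n (F.imp G ::ₘ Γ) F → GPP ok good n (G ::ₘ Γ) H →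
      GPP ok good (n+1) (F.imp G ::ₘ Γ) H
  | impR (n : ℕ) (Γ : Multiset Fm) (F G : Fm) :
      ok Γ (F ::ₘ Γ) → good Γ (F.imp G) →
      GPP ok good n (F ::ₘ Γ) G → GPP ok good (n+1) Γ (F.imp G)
  | KI1 (n : ℕ) (Γ Δ : Multiset Fm) (F : Fm) :
      (∀ G, Fm.K G ∉ Γ) →
      ok (Γ + Kset Δ) (Γ + Kset Δ + Δ) → good (Γ + Kset Δ) (Fm.K F) →
      GPP ok good n (Γ + Kset Δ + Δ) F → GPP ok good (n+1) (Γ + Kset Δ) (Fm.K F)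
  | U (n : ℕ) (Γ : Multiset Fm) (F : Fm) :
      ok Γ Γ → good Γ F →
      GPP ok good n Γ (Fm.K Fm.bot) → GPP ok good (n+1) Γ F
  | andC1 (n : ℕ) (Γ : Multiset Fm) (F G H : Fm) :
      ok (F.and G ::ₘ F ::ₘ Γ) (F.and G ::ₘ F ::ₘ G ::ₘ Γ) →
      good (F.and G ::ₘ F ::ₘ Γ) H →
      GPP ok good n (F.and G ::ₘ F ::ₘ G ::ₘ Γ) H →
      GPP ok good (n+1) (F.and G ::ₘ F ::ₘ Γ) H
  | andC2 (n : ℕ) (Γ : Multiset Fm) (F G H : Fm) :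
      ok (F.and G ::ₘ G ::ₘ Γ) (F.and G ::ₘ F ::ₘ G ::ₘ Γ) →
      good (F.and G ::ₘ G ::ₘ Γ) H →
      GPP ok good n (F.and G ::ₘ F ::ₘ G ::ₘ Γ) H →
      GPP ok good (n+1) (F.and G ::ₘ G ::ₘ Γ) H
  | andC (n : ℕ) (Γ : Multiset Fm) (F G H : Fm) :
      ok (F.and G ::ₘ Γ) (F.and G ::ₘ F ::ₘ G ::ₘ Γ) →
      good (F.and G ::ₘ Γ) H →
      GPP ok good n (F.and G ::ₘ F ::ₘ G ::ₘ Γ) H →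
      GPP ok good (n+1) (F.and G ::ₘ Γ) H
  | orC (n : ℕ) (Γ : Multiset Fm) (F G H : Fm) :
      ok (F.or G ::ₘ Γ) (F.or G ::ₘ F ::ₘ Γ) → ok (F.or G ::ₘ Γ) (F.or G ::ₘ G ::ₘ Γ) →
      good (F.or G ::ₘ Γ) H →
      GPP ok good n (F.or G ::ₘ F ::ₘ Γ) H → GPP ok good n (F.or G ::ₘ G ::ₘ Γ) H →
      GPP ok good (n+1) (F.or G ::ₘ Γ) H
  | impRW (n : ℕ) (Γ : Multiset Fm) (F G : Fm) :
      ok (F ::ₘ Γ) (F ::ₘ Γ) → good (F ::ₘ Γ) (F.imp G) →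
      GPP ok good n (F ::ₘ Γ) G → GPP ok good (n+1) (F ::ₘ Γ) (F.imp G)
  | impC (n : ℕ) (Γ : Multiset Fm) (F G H : Fm) :
      ok (F.imp G ::ₘ Γ) (F.imp G ::ₘ Γ) → ok (F.imp G ::ₘ Γ) (F.imp G ::ₘ G ::ₘ Γ) →
      good (F.imp G ::ₘ Γ) H →
      GPP ok good n (F.imp G ::ₘ Γ) F → GPP ok good n (F.imp G ::ₘ G ::ₘ Γ) H →
      GPP ok good (n+1) (F.imp G ::ₘ Γ) H
  | KI1W (n : ℕ) (Γ Δ₁ Δ₂ : Multiset Fm) (F : Fm) :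
      (∀ G, Fm.K G ∉ Γ + Δ₁) →
      ok (Γ + Δ₁ + Kset (Δ₁ + Δ₂)) (Γ + Kset (Δ₁ + Δ₂) + Δ₁ + Δ₂) →
      good (Γ + Δ₁ + Kset (Δ₁ + Δ₂)) (Fm.K F) →
      GPP ok good n (Γ + Kset (Δ₁ + Δ₂) + Δ₁ + Δ₂) F →
      GPP ok good (n+1) (Γ + Δ₁ + Kset (Δ₁ + Δ₂)) (Fm.K F)

/-- IELG⁺⁺-provability with depth at most n (no constraints). -/
def IELGpp (n : ℕ) (Γ : Multiset Fm) (F : Fm) : Prop :=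
  GPP (fun _ _ => True) (fun _ _ => True) n Γ F

/-- A rule instance is monotone if the set of antecedent formulas of the
conclusion is contained in that of each premise. -/
def monoOK (c p : Multiset Fm) : Prop := c.toFinset ⊆ p.toFinset

/-- Monotone IELG⁺⁺-derivations: every rule instance is monotone. -/
def IELGppMono (n : ℕ) (Γ : Multiset Fm) (F : Fm) : Prop :=
  GPP monoOK (fun _ _ => True) n Γ F

/-- Monotone IELG⁺⁺-derivations in which every sequent has a duplicate-free
antecedent (the form of "minimal" derivations, apart from depth minimality). -/
def IELGppMonoSet (n : ℕ) (Γ : Multiset Fm) (F : Fm) : Prop :=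
  GPP monoOK (fun Γ' _ => Γ'.Nodup) n Γ F

/-- The length of a formula. -/
def Fm.len : Fm → ℕ
  | Fm.var _ => 1
  | Fm.bot => 1
  | Fm.and F G => F.len + G.len + 1
  | Fm.or F G => F.len + G.len + 1
  | Fm.imp F G => F.len + G.len + 1
  | Fm.K F => F.len + 1

/-- The size of a sequent: the sum of the lengths of all its formulas. -/
def seqSize (Γ : Multiset Fm) (F : Fm) : ℕ := (Γ.map Fm.len).sum + F.len

namespace Fm

def sub : Fm → Finset Fm
  | var n => {var n}
  | bot => {bot}
  | and F G => insert (and F G) (F.sub ∪ G.sub)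
  | or F G => insert (or F G) (F.sub ∪ G.sub)
  | imp F G => insert (imp F G) (F.sub ∪ G.sub)
  | K F => insert (K F) F.sub

lemma mem_sub_self : ∀ F : Fm, F ∈ F.sub := by
  intro F; cases F <;> simp [sub]

lemma card_sub_le : ∀ F : Fm, F.sub.card ≤ F.len := by
  intro F
  induction F with
  | var n => simp [sub, len]
  | bot => simp [sub, len]
  | and F G ihF ihG =>
      refine le_trans (Finset.card_insert_le _ _) ?_
      have := Finset.card_union_le F.sub G.sub
      simp [len]; omega
  | or F G ihF ihG =>
      refine le_trans (Finset.card_insert_le _ _) ?_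
      have := Finset.card_union_le F.sub G.sub
      simp [len]; omega
  | imp F G ihF ihG =>
      refine le_trans (Finset.card_insert_le _ _) ?_
      have := Finset.card_union_le F.sub G.sub
      simp [len]; omega
  | K F ihF =>
      refine le_trans (Finset.card_insert_le _ _) ?_
      simp [len]; omega

lemma len_le_of_mem_sub : ∀ F : Fm, ∀ H ∈ F.sub, H.len ≤ F.len := by
  intro F
  induction F with
  | var n => intro H hH; simp [sub] at hH; subst hH; simp [len]
  | bot => intro H hH; simp [sub] at hH; subst hH; simp [len]
  | and F G ihF ihG =>
      intro H hH
      simp only [sub, Finset.mem_insert, Finset.mem_union] at hH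
      rcases hH with rfl | h | h
      · exact le_refl _
      · have := ihF H h; simp [len]; omega
      · have := ihG H h; simp [len]; omega
  | or F G ihF ihG =>
      intro H hH
      simp only [sub, Finset.mem_insert, Finset.mem_union] at hH
      rcases hH with rfl | h | h
      · exact le_refl _
      · have := ihF H h; simp [len]; omega
      · have := ihG H h; simp [len]; omega
  | imp F G ihF ihG =>
      intro H hH
      simp only [sub, Finset.mem_insert, Finset.mem_union] at hH
      rcases hH with rfl | h | h
      · exact le_refl _
      · have := ihF H h; simp [len]; omega
      · have := ihG H h; simp [len]; omega
  | K F ihF =>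
      intro H hH
      simp only [sub, Finset.mem_insert] at hH
      rcases hH with rfl | h
      · exact le_refl _
      · have := ihF H h; simp [len]; omega

lemma sub_sub : ∀ F : Fm, ∀ H ∈ F.sub, H.sub ⊆ F.sub := by
  intro F
  induction F with
  | var n => intro H hH; simp [sub] at hH; subst hH; simp [sub]
  | bot => intro H hH; simp [sub] at hH; subst hH; simp [sub]
  | and F G ihF ihG =>
      intro H hH
      simp only [sub, Finset.mem_insert, Finset.mem_union] at hH
      rcases hH with rfl | h | h
      · exact Finset.Subset.refl _
      · intro x hx; simp only [sub, Finset.mem_insert, Finset.mem_union]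
        exact Or.inr (Or.inl (ihF H h hx))
      · intro x hx; simp only [sub, Finset.mem_insert, Finset.mem_union]
        exact Or.inr (Or.inr (ihG H h hx))
  | or F G ihF ihG =>
      intro H hH
      simp only [sub, Finset.mem_insert, Finset.mem_union] at hH
      rcases hH with rfl | h | h
      · exact Finset.Subset.refl _
      · intro x hx; simp only [sub, Finset.mem_insert, Finset.mem_union]
        exact Or.inr (Or.inl (ihF H h hx))
      · intro x hx; simp only [sub, Finset.mem_insert, Finset.mem_union]
        exact Or.inr (Or.inr (ihG H h hx))
  | imp F G ihF ihG =>
      intro H hH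
      simp only [sub, Finset.mem_insert, Finset.mem_union] at hH
      rcases hH with rfl | h | h
      · exact Finset.Subset.refl _
      · intro x hx; simp only [sub, Finset.mem_insert, Finset.mem_union]
        exact Or.inr (Or.inl (ihF H h hx))
      · intro x hx; simp only [sub, Finset.mem_insert, Finset.mem_union]
        exact Or.inr (Or.inr (ihG H h hx))
  | K F ihF =>
      intro H hH
      simp only [sub, Finset.mem_insert] at hH
      rcases hH with rfl | h
      · exact Finset.Subset.refl _
      · intro x hx; simp only [sub, Finset.mem_insert]
        exact Or.inr (ihF H h hx)

end Fm
section SC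
variable {T : Finset Fm}

lemma sc_andl (hT : ∀ H ∈ T, Fm.sub H ⊆ T) {F G : Fm} (h : Fm.and F G ∈ T) : F ∈ T :=
  hT _ h (by simp only [Fm.sub]; simp [Fm.mem_sub_self])

lemma sc_andr (hT : ∀ H ∈ T, Fm.sub H ⊆ T) {F G : Fm} (h : Fm.and F G ∈ T) : G ∈ T :=
  hT _ h (by simp only [Fm.sub]; simp [Fm.mem_sub_self])

lemma sc_orl (hT : ∀ H ∈ T, Fm.sub H ⊆ T) {F G : Fm} (h : Fm.or F G ∈ T) : F ∈ T :=
  hT _ h (by simp only [Fm.sub]; simp [Fm.mem_sub_self])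

lemma sc_orr (hT : ∀ H ∈ T, Fm.sub H ⊆ T) {F G : Fm} (h : Fm.or F G ∈ T) : G ∈ T :=
  hT _ h (by simp only [Fm.sub]; simp [Fm.mem_sub_self])

lemma sc_impl (hT : ∀ H ∈ T, Fm.sub H ⊆ T) {F G : Fm} (h : Fm.imp F G ∈ T) : F ∈ T :=
  hT _ h (by simp only [Fm.sub]; simp [Fm.mem_sub_self])

lemma sc_impr (hT : ∀ H ∈ T, Fm.sub H ⊆ T) {F G : Fm} (h : Fm.imp F G ∈ T) : G ∈ T :=
  hT _ h (by simp only [Fm.sub]; simp [Fm.mem_sub_self])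

lemma sc_k (hT : ∀ H ∈ T, Fm.sub H ⊆ T) {F : Fm} (h : Fm.K F ∈ T) : F ∈ T :=
  hT _ h (by simp only [Fm.sub]; simp [Fm.mem_sub_self])

end SC
lemma gpp_step {ok : Multiset Fm → Multiset Fm → Prop} {good : Multiset Fm → Fm → Prop}
    {m : ℕ} {Γ : Multiset Fm} {E : Fm} (h : GPP ok good m Γ E) :
    (∃ A Γ', Γ = A ::ₘ Γ' ∧ E = A ∧ A.isAtom ∧ good Γ E) ∨
    (∃ n, m = n + 1 ∧ ∃ P : List (Multiset Fm × Fm), P ≠ [] ∧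
      (∀ Q ∈ P, GPP ok good n Q.1 Q.2 ∧ ok Γ Q.1) ∧
      (∀ T : Finset Fm, (∀ H ∈ T, Fm.sub H ⊆ T) → Fm.K Fm.bot ∈ T →
        (∀ x ∈ Γ, x ∈ T) → E ∈ T → ∀ Q ∈ P, (∀ x ∈ Q.1, x ∈ T) ∧ Q.2 ∈ T) ∧
      (∀ (good' : Multiset Fm → Fm → Prop) (d : ℕ), good' Γ E →
        (∀ Q ∈ P, GPP ok good' d Q.1 Q.2) → GPP ok good' (d+1) Γ E)) := by
  cases h with
  | ax n Γ A hA hg =>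
      exact Or.inl ⟨E, Γ, rfl, rfl, hA, hg⟩
  | con n Γ Δ G h1 hg hp =>
      refine Or.inr ⟨n, rfl, [(Γ + Δ + Δ, E)], by simp, ?_, ?_, ?_⟩
      · rintro Q hQ; rw [List.mem_singleton] at hQ; subst hQ; exact ⟨hp, h1⟩
      · intro T hT hKb hm hF Q hQ
        rw [List.mem_singleton] at hQ; subst hQ
        refine ⟨fun x hx => ?_, hF⟩
        rcases Multiset.mem_add.mp hx with h | h
        · exact hm x h
        · exact hm x (Multiset.mem_add.mpr (Or.inr h))
      · intro good' d hg' hps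
        exact GPP.con d Γ Δ E h1 hg' (hps _ (List.mem_singleton.mpr rfl))
  | andL n Γ F G H h1 hg hp =>
      refine Or.inr ⟨n, rfl, [(F ::ₘ G ::ₘ Γ, E)], by simp, ?_, ?_, ?_⟩
      · rintro Q hQ; rw [List.mem_singleton] at hQ; subst hQ; exact ⟨hp, h1⟩
      · intro T hT hKb hm hF Q hQ
        rw [List.mem_singleton] at hQ; subst hQ
        have hFG : Fm.and F G ∈ T := hm _ (Multiset.mem_cons_self _ _)
        refine ⟨fun x hx => ?_, hF⟩
        rcases Multiset.mem_cons.mp hx with rfl | hx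
        · exact sc_andl hT hFG
        rcases Multiset.mem_cons.mp hx with rfl | hx
        · exact sc_andr hT hFG
        · exact hm x (Multiset.mem_cons_of_mem hx)
      · intro good' d hg' hps
        exact GPP.andL d Γ F G E h1 hg' (hps _ (List.mem_singleton.mpr rfl))
  | andR n Γ F G h1 hg hp1 hp2 =>
      refine Or.inr ⟨n, rfl, [(Γ, F), (Γ, G)], by simp, ?_, ?_, ?_⟩
      · rintro Q hQ
        simp only [List.mem_cons, List.mem_singleton, List.not_mem_nil, or_false] at hQ
        rcases hQ with rfl | rfl
        · exact ⟨hp1, h1⟩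
        · exact ⟨hp2, h1⟩
      · intro T hT hKb hm hF Q hQ
        simp only [List.mem_cons, List.mem_singleton, List.not_mem_nil, or_false] at hQ
        rcases hQ with rfl | rfl
        · exact ⟨hm, sc_andl hT hF⟩
        · exact ⟨hm, sc_andr hT hF⟩
      · intro good' d hg' hps
        exact GPP.andR d Γ F G h1 hg' (hps (Γ, F) (by simp)) (hps (Γ, G) (by simp))
  | orL n Γ F G H h1 h2 hg hp1 hp2 =>
      refine Or.inr ⟨n, rfl, [(F ::ₘ Γ, E), (G ::ₘ Γ, E)], by simp, ?_, ?_, ?_⟩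
      · rintro Q hQ
        simp only [List.mem_cons, List.mem_singleton, List.not_mem_nil, or_false] at hQ
        rcases hQ with rfl | rfl
        · exact ⟨hp1, h1⟩
        · exact ⟨hp2, h2⟩
      · intro T hT hKb hm hF Q hQ
        have hFG : Fm.or F G ∈ T := hm _ (Multiset.mem_cons_self _ _)
        simp only [List.mem_cons, List.mem_singleton, List.not_mem_nil, or_false] at hQ
        rcases hQ with rfl | rfl
        · refine ⟨fun x hx => ?_, hF⟩
          rcases Multiset.mem_cons.mp hx with rfl | hx
          · exact sc_orl hT hFG
          · exact hm x (Multiset.mem_cons_of_mem hx)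
        · refine ⟨fun x hx => ?_, hF⟩
          rcases Multiset.mem_cons.mp hx with rfl | hx
          · exact sc_orr hT hFG
          · exact hm x (Multiset.mem_cons_of_mem hx)
      · intro good' d hg' hps
        exact GPP.orL d Γ F G E h1 h2 hg' (hps (F ::ₘ Γ, E) (by simp)) (hps (G ::ₘ Γ, E) (by simp))
  | orR1 n Γ F G h1 hg hp =>
      refine Or.inr ⟨n, rfl, [(Γ, F)], by simp, ?_, ?_, ?_⟩
      · rintro Q hQ; rw [List.mem_singleton] at hQ; subst hQ; exact ⟨hp, h1⟩
      · intro T hT hKb hm hF Q hQ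
        rw [List.mem_singleton] at hQ; subst hQ
        exact ⟨hm, sc_orl hT hF⟩
      · intro good' d hg' hps
        exact GPP.orR1 d Γ F G h1 hg' (hps _ (List.mem_singleton.mpr rfl))
  | orR2 n Γ F G h1 hg hp =>
      refine Or.inr ⟨n, rfl, [(Γ, G)], by simp, ?_, ?_, ?_⟩
      · rintro Q hQ; rw [List.mem_singleton] at hQ; subst hQ; exact ⟨hp, h1⟩
      · intro T hT hKb hm hF Q hQ
        rw [List.mem_singleton] at hQ; subst hQ
        exact ⟨hm, sc_orr hT hF⟩
      · intro good' d hg' hps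
        exact GPP.orR2 d Γ F G h1 hg' (hps _ (List.mem_singleton.mpr rfl))
  | impL n Γ F G H h1 h2 hg hp1 hp2 =>
      refine Or.inr ⟨n, rfl, [(Fm.imp F G ::ₘ Γ, F), (G ::ₘ Γ, E)], by simp, ?_, ?_, ?_⟩
      · rintro Q hQ
        simp only [List.mem_cons, List.mem_singleton, List.not_mem_nil, or_false] at hQ
        rcases hQ with rfl | rfl
        · exact ⟨hp1, h1⟩
        · exact ⟨hp2, h2⟩
      · intro T hT hKb hm hF Q hQ
        have hFG : Fm.imp F G ∈ T := hm _ (Multiset.mem_cons_self _ _)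
        simp only [List.mem_cons, List.mem_singleton, List.not_mem_nil, or_false] at hQ
        rcases hQ with rfl | rfl
        · exact ⟨hm, sc_impl hT hFG⟩
        · refine ⟨fun x hx => ?_, hF⟩
          rcases Multiset.mem_cons.mp hx with rfl | hx
          · exact sc_impr hT hFG
          · exact hm x (Multiset.mem_cons_of_mem hx)
      · intro good' d hg' hps
        exact GPP.impL d Γ F G E h1 h2 hg' (hps (Fm.imp F G ::ₘ Γ, F) (by simp)) (hps (G ::ₘ Γ, E) (by simp))
  | impR n Γ F G h1 hg hp =>
      refine Or.inr ⟨n, rfl, [(F ::ₘ Γ, G)], by simp, ?_, ?_, ?_⟩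
      · rintro Q hQ; rw [List.mem_singleton] at hQ; subst hQ; exact ⟨hp, h1⟩
      · intro T hT hKb hm hF Q hQ
        rw [List.mem_singleton] at hQ; subst hQ
        refine ⟨fun x hx => ?_, sc_impr hT hF⟩
        rcases Multiset.mem_cons.mp hx with rfl | hx
        · exact sc_impl hT hF
        · exact hm x hx
      · intro good' d hg' hps
        exact GPP.impR d Γ F G h1 hg' (hps _ (List.mem_singleton.mpr rfl))
  | KI1 n Γ Δ F hK h1 hg hp =>
      refine Or.inr ⟨n, rfl, [(Γ + Kset Δ + Δ, F)], by simp, ?_, ?_, ?_⟩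
      · rintro Q hQ; rw [List.mem_singleton] at hQ; subst hQ; exact ⟨hp, h1⟩
      · intro T hT hKb hm hF Q hQ
        rw [List.mem_singleton] at hQ; subst hQ
        refine ⟨fun x hx => ?_, sc_k hT hF⟩
        rcases Multiset.mem_add.mp hx with h | h
        · exact hm x h
        · have : Fm.K x ∈ T :=
            hm _ (Multiset.mem_add.mpr (Or.inr (Multiset.mem_map_of_mem _ h)))
          exact sc_k hT this
      · intro good' d hg' hps
        exact GPP.KI1 d Γ Δ F hK h1 hg' (hps _ (List.mem_singleton.mpr rfl))
  | U n Γ F h1 hg hp =>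
      refine Or.inr ⟨n, rfl, [(Γ, Fm.K Fm.bot)], by simp, ?_, ?_, ?_⟩
      · rintro Q hQ; rw [List.mem_singleton] at hQ; subst hQ; exact ⟨hp, h1⟩
      · intro T hT hKb hm hF Q hQ
        rw [List.mem_singleton] at hQ; subst hQ
        exact ⟨hm, hKb⟩
      · intro good' d hg' hps
        exact GPP.U d Γ E h1 hg' (hps _ (List.mem_singleton.mpr rfl))
  | andC1 n Γ F G H h1 hg hp =>
      refine Or.inr ⟨n, rfl, [(Fm.and F G ::ₘ F ::ₘ G ::ₘ Γ, E)], by simp, ?_, ?_, ?_⟩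
      · rintro Q hQ; rw [List.mem_singleton] at hQ; subst hQ; exact ⟨hp, h1⟩
      · intro T hT hKb hm hF Q hQ
        rw [List.mem_singleton] at hQ; subst hQ
        have hFG : Fm.and F G ∈ T := hm _ (Multiset.mem_cons_self _ _)
        refine ⟨fun x hx => ?_, hF⟩
        rcases Multiset.mem_cons.mp hx with rfl | hx
        · exact hFG
        rcases Multiset.mem_cons.mp hx with rfl | hx
        · exact sc_andl hT hFG
        rcases Multiset.mem_cons.mp hx with rfl | hx
        · exact sc_andr hT hFG
        · exact hm x (Multiset.mem_cons_of_mem (Multiset.mem_cons_of_mem hx))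
      · intro good' d hg' hps
        exact GPP.andC1 d Γ F G E h1 hg' (hps _ (List.mem_singleton.mpr rfl))
  | andC2 n Γ F G H h1 hg hp =>
      refine Or.inr ⟨n, rfl, [(Fm.and F G ::ₘ F ::ₘ G ::ₘ Γ, E)], by simp, ?_, ?_, ?_⟩
      · rintro Q hQ; rw [List.mem_singleton] at hQ; subst hQ; exact ⟨hp, h1⟩
      · intro T hT hKb hm hF Q hQ
        rw [List.mem_singleton] at hQ; subst hQ
        have hFG : Fm.and F G ∈ T := hm _ (Multiset.mem_cons_self _ _)
        refine ⟨fun x hx => ?_, hF⟩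
        rcases Multiset.mem_cons.mp hx with rfl | hx
        · exact hFG
        rcases Multiset.mem_cons.mp hx with rfl | hx
        · exact sc_andl hT hFG
        rcases Multiset.mem_cons.mp hx with rfl | hx
        · exact sc_andr hT hFG
        · exact hm x (Multiset.mem_cons_of_mem (Multiset.mem_cons_of_mem hx))
      · intro good' d hg' hps
        exact GPP.andC2 d Γ F G E h1 hg' (hps _ (List.mem_singleton.mpr rfl))
  | andC n Γ F G H h1 hg hp =>
      refine Or.inr ⟨n, rfl, [(Fm.and F G ::ₘ F ::ₘ G ::ₘ Γ, E)], by simp, ?_, ?_, ?_⟩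
      · rintro Q hQ; rw [List.mem_singleton] at hQ; subst hQ; exact ⟨hp, h1⟩
      · intro T hT hKb hm hF Q hQ
        rw [List.mem_singleton] at hQ; subst hQ
        have hFG : Fm.and F G ∈ T := hm _ (Multiset.mem_cons_self _ _)
        refine ⟨fun x hx => ?_, hF⟩
        rcases Multiset.mem_cons.mp hx with rfl | hx
        · exact hFG
        rcases Multiset.mem_cons.mp hx with rfl | hx
        · exact sc_andl hT hFG
        rcases Multiset.mem_cons.mp hx with rfl | hx
        · exact sc_andr hT hFG
        · exact hm x (Multiset.mem_cons_of_mem hx)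
      · intro good' d hg' hps
        exact GPP.andC d Γ F G E h1 hg' (hps _ (List.mem_singleton.mpr rfl))
  | orC n Γ F G H h1 h2 hg hp1 hp2 =>
      refine Or.inr ⟨n, rfl,
        [(Fm.or F G ::ₘ F ::ₘ Γ, E), (Fm.or F G ::ₘ G ::ₘ Γ, E)], by simp, ?_, ?_, ?_⟩
      · rintro Q hQ
        simp only [List.mem_cons, List.mem_singleton, List.not_mem_nil, or_false] at hQ
        rcases hQ with rfl | rfl
        · exact ⟨hp1, h1⟩
        · exact ⟨hp2, h2⟩
      · intro T hT hKb hm hF Q hQ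
        have hFG : Fm.or F G ∈ T := hm _ (Multiset.mem_cons_self _ _)
        simp only [List.mem_cons, List.mem_singleton, List.not_mem_nil, or_false] at hQ
        rcases hQ with rfl | rfl
        · refine ⟨fun x hx => ?_, hF⟩
          rcases Multiset.mem_cons.mp hx with rfl | hx
          · exact hFG
          rcases Multiset.mem_cons.mp hx with rfl | hx
          · exact sc_orl hT hFG
          · exact hm x (Multiset.mem_cons_of_mem hx)
        · refine ⟨fun x hx => ?_, hF⟩
          rcases Multiset.mem_cons.mp hx with rfl | hx
          · exact hFG
          rcases Multiset.mem_cons.mp hx with rfl | hx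
          · exact sc_orr hT hFG
          · exact hm x (Multiset.mem_cons_of_mem hx)
      · intro good' d hg' hps
        exact GPP.orC d Γ F G E h1 h2 hg' (hps (Fm.or F G ::ₘ F ::ₘ Γ, E) (by simp)) (hps (Fm.or F G ::ₘ G ::ₘ Γ, E) (by simp))
  | impRW n Γ F G h1 hg hp =>
      refine Or.inr ⟨n, rfl, [(F ::ₘ Γ, G)], by simp, ?_, ?_, ?_⟩
      · rintro Q hQ; rw [List.mem_singleton] at hQ; subst hQ; exact ⟨hp, h1⟩
      · intro T hT hKb hm hF Q hQ
        rw [List.mem_singleton] at hQ; subst hQ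
        exact ⟨hm, sc_impr hT hF⟩
      · intro good' d hg' hps
        exact GPP.impRW d Γ F G h1 hg' (hps _ (List.mem_singleton.mpr rfl))
  | impC n Γ F G H h1 h2 hg hp1 hp2 =>
      refine Or.inr ⟨n, rfl,
        [(Fm.imp F G ::ₘ Γ, F), (Fm.imp F G ::ₘ G ::ₘ Γ, E)], by simp, ?_, ?_, ?_⟩
      · rintro Q hQ
        simp only [List.mem_cons, List.mem_singleton, List.not_mem_nil, or_false] at hQ
        rcases hQ with rfl | rfl
        · exact ⟨hp1, h1⟩
        · exact ⟨hp2, h2⟩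
      · intro T hT hKb hm hF Q hQ
        have hFG : Fm.imp F G ∈ T := hm _ (Multiset.mem_cons_self _ _)
        simp only [List.mem_cons, List.mem_singleton, List.not_mem_nil, or_false] at hQ
        rcases hQ with rfl | rfl
        · exact ⟨hm, sc_impl hT hFG⟩
        · refine ⟨fun x hx => ?_, hF⟩
          rcases Multiset.mem_cons.mp hx with rfl | hx
          · exact hFG
          rcases Multiset.mem_cons.mp hx with rfl | hx
          · exact sc_impr hT hFG
          · exact hm x (Multiset.mem_cons_of_mem hx)
      · intro good' d hg' hps
        exact GPP.impC d Γ F G E h1 h2 hg' (hps (Fm.imp F G ::ₘ Γ, F) (by simp)) (hps (Fm.imp F G ::ₘ G ::ₘ Γ, E) (by simp))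
  | KI1W n Γ Δ₁ Δ₂ F hK h1 hg hp =>
      refine Or.inr ⟨n, rfl, [(Γ + Kset (Δ₁ + Δ₂) + Δ₁ + Δ₂, F)], by simp, ?_, ?_, ?_⟩
      · rintro Q hQ; rw [List.mem_singleton] at hQ; subst hQ; exact ⟨hp, h1⟩
      · intro T hT hKb hm hF Q hQ
        rw [List.mem_singleton] at hQ; subst hQ
        have hΓ : ∀ x ∈ Γ, x ∈ T := fun x hx =>
          hm x (Multiset.mem_add.mpr (Or.inl (Multiset.mem_add.mpr (Or.inl hx))))
        have hΔ₁ : ∀ x ∈ Δ₁, x ∈ T := fun x hx =>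
          hm x (Multiset.mem_add.mpr (Or.inl (Multiset.mem_add.mpr (Or.inr hx))))
        have hKs : ∀ x ∈ Kset (Δ₁ + Δ₂), x ∈ T := fun x hx =>
          hm x (Multiset.mem_add.mpr (Or.inr hx))
        refine ⟨fun x hx => ?_, sc_k hT hF⟩
        rcases Multiset.mem_add.mp hx with h | h
        · rcases Multiset.mem_add.mp h with h | h
          · rcases Multiset.mem_add.mp h with h | h
            · exact hΓ x h
            · exact hKs x h
          · exact hΔ₁ x h
        · have : Fm.K x ∈ T :=
            hKs _ (Multiset.mem_map_of_mem _ (Multiset.mem_add.mpr (Or.inr h)))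
          exact sc_k hT this
      · intro good' d hg' hps
        exact GPP.KI1W d Γ Δ₁ Δ₂ F hK h1 hg' (hps _ (List.mem_singleton.mpr rfl))
lemma gpp_good {ok : Multiset Fm → Multiset Fm → Prop} {good : Multiset Fm → Fm → Prop}
    {m : ℕ} {Γ : Multiset Fm} {E : Fm} (h : GPP ok good m Γ E) : good Γ E := by
  cases h <;> assumption

lemma gpp_lift {ok : Multiset Fm → Multiset Fm → Prop} {good : Multiset Fm → Fm → Prop} :
    ∀ m {m' : ℕ} {Γ : Multiset Fm} {E : Fm}, GPP ok good m Γ E → m ≤ m' →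
      GPP ok good m' Γ E := by
  intro m
  induction m using Nat.strong_induction_on with
  | _ m IH =>
    intro m' Γ E h hle
    rcases gpp_step h with ⟨A, Γ', h1, h2, hA, hg⟩ | ⟨n, rfl, P, hne, hprem, hmem, hre⟩
    · subst h1; subst h2; exact GPP.ax _ _ _ hA hg
    · obtain ⟨d, rfl⟩ : ∃ d, m' = d + 1 := ⟨m' - 1, by omega⟩
      refine hre good d (gpp_good h) (fun Q hQ => ?_)
      exact IH n (by omega) (hprem Q hQ).1 (by omega)

lemma gpp_mono_good {ok : Multiset Fm → Multiset Fm → Prop}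
    {g g' : Multiset Fm → Fm → Prop} (himp : ∀ Γ E, g Γ E → g' Γ E) :
    ∀ m {Γ : Multiset Fm} {E : Fm}, GPP ok g m Γ E → GPP ok g' m Γ E := by
  intro m
  induction m using Nat.strong_induction_on with
  | _ m IH =>
    intro Γ E h
    rcases gpp_step h with ⟨A, Γ', h1, h2, hA, hg⟩ | ⟨n, rfl, P, hne, hprem, hmem, hre⟩
    · subst h1; subst h2; exact GPP.ax _ _ _ hA (himp _ _ hg)
    · exact hre g' n (himp _ _ (gpp_good h)) (fun Q hQ => IH n (by omega) (hprem Q hQ).1)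

/-- Antecedent elements in `S`, succedent in `S`, antecedent duplicate-free. -/
def good2 (S : Finset Fm) (Γ : Multiset Fm) (E : Fm) : Prop :=
  Γ.Nodup ∧ (∀ x ∈ Γ, x ∈ S) ∧ E ∈ S

lemma gpp_subf {S : Finset Fm} (hSC : ∀ H ∈ S, Fm.sub H ⊆ S) (hKb : Fm.K Fm.bot ∈ S) :
    ∀ m {Γ : Multiset Fm} {E : Fm}, GPP monoOK (fun Γ' _ => Γ'.Nodup) m Γ E →
      (∀ x ∈ Γ, x ∈ S) → E ∈ S → GPP monoOK (good2 S) m Γ E := by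
  intro m
  induction m using Nat.strong_induction_on with
  | _ m IH =>
    intro Γ E h hmΓ hmE
    rcases gpp_step h with ⟨A, Γ', h1, h2, hA, hg⟩ | ⟨n, rfl, P, hne, hprem, hmem, hre⟩
    · subst h1; subst h2; exact GPP.ax _ _ _ hA ⟨hg, hmΓ, hmE⟩
    · refine hre (good2 S) n ⟨gpp_good h, hmΓ, hmE⟩ (fun Q hQ => ?_)
      obtain ⟨hq1, hq2⟩ := hmem S hSC hKb hmΓ hmE Q hQ
      exact IH n (by omega) (hprem Q hQ).1 hq1 hq2

noncomputable def mu (S : Finset Fm) (Γ : Multiset Fm) (E : Fm) : ℕ :=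
  sInf {m | GPP monoOK (good2 S) m Γ E}

open Classical in
noncomputable def rk (S : Finset Fm) (Γ : Multiset Fm) (E : Fm) : ℕ :=
  (S.filter (fun G => (∃ k, GPP monoOK (good2 S) k Γ G) ∧ mu S Γ G < mu S Γ E)).card

lemma mem_le_foldr_max : ∀ (l : List ℕ), ∀ x ∈ l, x ≤ l.foldr max 0 := by
  intro l
  induction l with
  | nil => simp
  | cons a t ih =>
      intro x hx
      rcases List.mem_cons.mp hx with rfl | hx
      · exact le_max_left _ _
      · exact le_trans (ih x hx) (le_max_right _ _)

lemma foldr_max_succ_le {l : List ℕ} {B : ℕ} (h1 : 1 ≤ B) (h : ∀ x ∈ l, x + 1 ≤ B) :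
    l.foldr max 0 + 1 ≤ B := by
  induction l with
  | nil => simpa using h1
  | cons a t ih =>
      have ha := h a (by simp)
      have ht := ih (fun x hx => h x (by simp [hx]))
      simp only [List.foldr_cons]
      rcases Nat.le_total a (t.foldr max 0) with hmax | hmax
      · rw [max_eq_right hmax]; exact ht
      · rw [max_eq_left hmax]; exact ha
lemma rk_le_card (S : Finset Fm) (Γ : Multiset Fm) (E : Fm) : rk S Γ E ≤ S.card := by
  classical
  exact Finset.card_filter_le _ _

lemma mu_bound {S : Finset Fm} (hSC : ∀ H ∈ S, Fm.sub H ⊆ S) (hKb : Fm.K Fm.bot ∈ S) :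
    ∀ m (Γ : Multiset Fm) (E : Fm), GPP monoOK (good2 S) m Γ E → m = mu S Γ E →
      m ≤ (S.card + 1) * (S.card + 1 - Γ.toFinset.card) + rk S Γ E := by
  classical
  intro m
  induction m using Nat.strong_induction_on with
  | _ m IH =>
    intro Γ E h hmu
    rcases gpp_step h with ⟨A, Γ', h1, h2, hA, hg⟩ | ⟨n, rfl, P, hne, hprem, hmem, hre⟩
    · -- axiom: depth 0 suffices
      have h0 : GPP monoOK (good2 S) 0 Γ E := by
        subst h1; subst h2; exact GPP.ax _ _ _ hA hg
      have : mu S Γ E ≤ 0 := Nat.sInf_le h0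
      omega
    · have hg : good2 S Γ E := gpp_good h
      have hΓcard : Γ.toFinset.card ≤ S.card :=
        Finset.card_le_card (fun x hx => hg.2.1 x (Multiset.mem_toFinset.mp hx))
      have hBpos : 1 ≤ (S.card + 1) * (S.card + 1 - Γ.toFinset.card) :=
        Nat.one_le_iff_ne_zero.mpr (by
          have h1 : 0 < S.card + 1 := by omega
          have h2 : 0 < S.card + 1 - Γ.toFinset.card := by omega
          positivity)
      have key : ∀ Q ∈ P, mu S Q.1 Q.2 + 1 ≤
          (S.card + 1) * (S.card + 1 - Γ.toFinset.card) + rk S Γ E := by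
        intro Q hQ
        obtain ⟨hQp, hQok⟩ := hprem Q hQ
        obtain ⟨hQmem, hQsucc⟩ := hmem S hSC hKb hg.2.1 hg.2.2 Q hQ
        have hne' : {k | GPP monoOK (good2 S) k Q.1 Q.2}.Nonempty := ⟨n, hQp⟩
        have hwit : GPP monoOK (good2 S) (mu S Q.1 Q.2) Q.1 Q.2 := Nat.sInf_mem hne'
        have hmuQ : mu S Q.1 Q.2 ≤ n := Nat.sInf_le hQp
        have hIH := IH (mu S Q.1 Q.2) (by omega) Q.1 Q.2 hwit rfl
        have hQgood : good2 S Q.1 Q.2 := gpp_good hwit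
        have hsub : Γ.toFinset ⊆ Q.1.toFinset := hQok
        by_cases hcase : Γ.toFinset = Q.1.toFinset
        · -- same antecedent: rank strictly increases
          have hQeq : Q.1 = Γ := by
            have hval := congrArg Finset.val hcase
            rw [Multiset.toFinset_val, Multiset.toFinset_val,
              Multiset.dedup_eq_self.mpr hg.1, Multiset.dedup_eq_self.mpr hQgood.1] at hval
            exact hval.symm
          rw [hQeq] at hIH hwit hmuQ ⊢
          have hmuQlt : mu S Γ Q.2 < mu S Γ E := by omega
          have hrk : rk S Γ Q.2 < rk S Γ E := by
            apply Finset.card_lt_card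
            refine (Finset.ssubset_iff_of_subset ?_).mpr ?_
            · intro G hG
              simp only [Finset.mem_filter] at hG ⊢
              exact ⟨hG.1, hG.2.1, lt_trans hG.2.2 hmuQlt⟩
            · refine ⟨Q.2, ?_, ?_⟩
              · simp only [Finset.mem_filter]
                exact ⟨hQsucc, ⟨_, hwit⟩, hmuQlt⟩
              · simp only [Finset.mem_filter]
                rintro ⟨-, -, hlt⟩
                exact absurd hlt (lt_irrefl _)
          omega
        · -- antecedent strictly grows
          have hlt : Γ.toFinset.card < Q.1.toFinset.card :=
            Finset.card_lt_card (Finset.ssubset_iff_subset_ne.mpr ⟨hsub, hcase⟩)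
          have hQcard : Q.1.toFinset.card ≤ S.card :=
            Finset.card_le_card (fun x hx => hQgood.2.1 x (Multiset.mem_toFinset.mp hx))
          have hrkQ : rk S Q.1 Q.2 ≤ S.card := rk_le_card S Q.1 Q.2
          have hmono : (S.card + 1) * (S.card + 1 - Q.1.toFinset.card) ≤
              (S.card + 1) * (S.card - Γ.toFinset.card) :=
            Nat.mul_le_mul_left _ (by omega)
          have heq : (S.card + 1) * (S.card - Γ.toFinset.card) + (S.card + 1) =
              (S.card + 1) * (S.card + 1 - Γ.toFinset.card) := by
            rw [← Nat.mul_succ]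
            congr 1
            omega
          omega
      -- rebuild the derivation at the max of the premise depths
      set d := (P.map fun Q => mu S Q.1 Q.2).foldr max 0 with hd
      have hall : ∀ Q ∈ P, GPP monoOK (good2 S) d Q.1 Q.2 := by
        intro Q hQ
        have hne' : {k | GPP monoOK (good2 S) k Q.1 Q.2}.Nonempty := ⟨n, (hprem Q hQ).1⟩
        have hwit : GPP monoOK (good2 S) (mu S Q.1 Q.2) Q.1 Q.2 := Nat.sInf_mem hne'
        exact gpp_lift _ hwit (mem_le_foldr_max _ _ (List.mem_map_of_mem hQ))
      have hbuilt : GPP monoOK (good2 S) (d + 1) Γ E := hre _ d hg hall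
      have hmle : n + 1 ≤ d + 1 := by
        rw [hmu]; exact Nat.sInf_le hbuilt
      have hdB : d + 1 ≤ (S.card + 1) * (S.card + 1 - Γ.toFinset.card) + rk S Γ E := by
        refine foldr_max_succ_le (by omega) ?_
        intro x hx
        obtain ⟨Q, hQ, rfl⟩ := List.mem_map.mp hx
        exact key Q hQ
      omega

/-- There are polynomials p, q such that every minimal derivation (a monotone
IELG⁺⁺-derivation with duplicate-free antecedents of minimal depth) of a
sequent of size n has depth at most p(n), and can be realized with all its
sequents of size at most q(n). -/
theorem stmt19 :
    ∃ p q : Polynomial ℕ, ∀ (Γ : Multiset Fm) (F : Fm) (m : ℕ),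
      IELGppMonoSet m Γ F → (∀ m' < m, ¬ IELGppMonoSet m' Γ F) →
      m ≤ p.eval (seqSize Γ F) ∧
      GPP monoOK (fun Γ' F' => Γ'.Nodup ∧ seqSize Γ' F' ≤ q.eval (seqSize Γ F))
        m Γ F := by
  classical
  refine ⟨(Polynomial.X + Polynomial.C 3) * (Polynomial.X + Polynomial.C 3)
      + Polynomial.X + Polynomial.C 3,
    (Polynomial.X + Polynomial.C 2) * (Polynomial.X + Polynomial.C 2)
      + Polynomial.X + Polynomial.C 2, ?_⟩
  intro Γ F m hms hmin
  have hpe : ∀ k : ℕ, Polynomial.eval k ((Polynomial.X + Polynomial.C 3) *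
      (Polynomial.X + Polynomial.C 3) + Polynomial.X + Polynomial.C 3)
      = (k+3)*(k+3) + k + 3 := by
    intro k; simp
  have hqe : ∀ k : ℕ, Polynomial.eval k ((Polynomial.X + Polynomial.C 2) *
      (Polynomial.X + Polynomial.C 2) + Polynomial.X + Polynomial.C 2)
      = (k+2)*(k+2) + k + 2 := by
    intro k; simp
  set n := seqSize Γ F with hn
  have hnval : n = (Γ.map Fm.len).sum + F.len := rfl
  set S := Γ.toFinset.biUnion Fm.sub ∪ (Fm.sub F ∪ Fm.sub (Fm.K Fm.bot)) with hSdef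
  have hSC : ∀ H ∈ S, Fm.sub H ⊆ S := by
    intro H hH y hy
    simp only [hSdef, Finset.mem_union, Finset.mem_biUnion] at hH ⊢
    rcases hH with ⟨x, hx, hHx⟩ | hH | hH
    · exact Or.inl ⟨x, hx, Fm.sub_sub x H hHx hy⟩
    · exact Or.inr (Or.inl (Fm.sub_sub F H hH hy))
    · exact Or.inr (Or.inr (Fm.sub_sub _ H hH hy))
  have hKb : Fm.K Fm.bot ∈ S := by
    simp only [hSdef, Finset.mem_union]
    exact Or.inr (Or.inr (Fm.mem_sub_self _))
  have hrootΓ : ∀ x ∈ Γ, x ∈ S := by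
    intro x hx
    simp only [hSdef, Finset.mem_union, Finset.mem_biUnion]
    exact Or.inl ⟨x, Multiset.mem_toFinset.mpr hx, Fm.mem_sub_self x⟩
  have hrootF : F ∈ S := by
    simp only [hSdef, Finset.mem_union]
    exact Or.inr (Or.inl (Fm.mem_sub_self F))
  have hnod : Γ.Nodup := gpp_good hms
  have hval : Γ.toFinset.val = Γ := by
    rw [Multiset.toFinset_val, Multiset.dedup_eq_self.mpr hnod]
  have hsum : Γ.toFinset.sum Fm.len = (Γ.map Fm.len).sum := by
    show (Multiset.map Fm.len Γ.toFinset.val).sum = _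
    rw [hval]
  have hcard : S.card ≤ n + 2 := by
    have h1 : S.card ≤ (Γ.toFinset.biUnion Fm.sub).card +
        ((Fm.sub F).card + (Fm.sub (Fm.K Fm.bot)).card) :=
      le_trans (Finset.card_union_le _ _) (Nat.add_le_add_left (Finset.card_union_le _ _) _)
    have h2 : (Γ.toFinset.biUnion Fm.sub).card ≤ Γ.toFinset.sum (fun x => (Fm.sub x).card) :=
      Finset.card_biUnion_le
    have h3 : Γ.toFinset.sum (fun x => (Fm.sub x).card) ≤ Γ.toFinset.sum Fm.len :=
      Finset.sum_le_sum (fun x _ => Fm.card_sub_le x)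
    have h4 := Fm.card_sub_le F
    have h5 : (Fm.sub (Fm.K Fm.bot)).card ≤ 2 := by
      have := Fm.card_sub_le (Fm.K Fm.bot)
      simpa [Fm.len] using this
    omega
  have hlen : ∀ H ∈ S, H.len ≤ n + 2 := by
    intro H hH
    simp only [hSdef, Finset.mem_union, Finset.mem_biUnion] at hH
    rcases hH with ⟨x, hx, hHx⟩ | hH | hH
    · have h1 := Fm.len_le_of_mem_sub x H hHx
      have h2 : x.len ≤ (Γ.map Fm.len).sum :=
        Multiset.single_le_sum (fun y _ => Nat.zero_le y) _
          (Multiset.mem_map_of_mem _ (Multiset.mem_toFinset.mp hx))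
      omega
    · have := Fm.len_le_of_mem_sub F H hH; omega
    · have h1 := Fm.len_le_of_mem_sub _ H hH
      have h2 : (Fm.K Fm.bot).len = 2 := by simp [Fm.len]
      omega
  have h2 : GPP monoOK (good2 S) m Γ F := gpp_subf hSC hKb m hms hrootΓ hrootF
  have hmu_le : mu S Γ F ≤ m := Nat.sInf_le h2
  have hne' : {k | GPP monoOK (good2 S) k Γ F}.Nonempty := ⟨m, h2⟩
  have hwit : GPP monoOK (good2 S) (mu S Γ F) Γ F := Nat.sInf_mem hne'
  have hm_le : m ≤ mu S Γ F := by
    by_contra hc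
    push_neg at hc
    exact hmin _ hc (gpp_mono_good (fun Γ' E hg => hg.1) _ hwit)
  have hmb := mu_bound hSC hKb m Γ F h2 (le_antisymm hm_le hmu_le)
  constructor
  · rw [hpe]
    have hrk := rk_le_card S Γ F
    have hmul : (S.card + 1) * (S.card + 1 - Γ.toFinset.card) ≤ (n + 3) * (n + 3) :=
      Nat.mul_le_mul (by omega) (by omega)
    omega
  · refine gpp_mono_good ?_ m h2
    intro Γ' E hg
    refine ⟨hg.1, ?_⟩
    rw [hqe]
    have hv : Γ'.toFinset.val = Γ' := by
      rw [Multiset.toFinset_val, Multiset.dedup_eq_self.mpr hg.1]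
    have hs1 : Γ'.toFinset.sum Fm.len = (Γ'.map Fm.len).sum := by
      show (Multiset.map Fm.len Γ'.toFinset.val).sum = _
      rw [hv]
    have hs2 : Γ'.toFinset.sum Fm.len ≤ S.sum Fm.len :=
      Finset.sum_le_sum_of_subset (fun x hx => hg.2.1 x (Multiset.mem_toFinset.mp hx))
    have hs3 : S.sum Fm.len ≤ S.card * (n + 2) := by
      have := Finset.sum_le_card_nsmul S Fm.len (n+2) (fun x hx => hlen x hx)
      simpa [smul_eq_mul] using this
    have hs4 : Fm.len E ≤ n + 2 := hlen E hg.2.2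
    have hs5 : S.card * (n+2) ≤ (n+2)*(n+2) := Nat.mul_le_mul_right _ hcard
    show (Γ'.map Fm.len).sum + E.len ≤ _
    omega
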